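/- Suppose there exists a finite set A ⊆ ℝ^d with #A = n that is shattered by the family 𝓒_d of closed balls in ℓ∞^d. Then there exists a set A' ⊆ ℝ^d with #A' = n that is shattered by 𝓒_d and such that for every coordinate projection π_j : ℝ^d → ℝ (j = 1, …, d) one has #π_j(A') = n, i.e. each π_j is injective on A'. -/

import Mathlib

open Set Metric

/-- A family `E` of subsets of `X` shatters a set `σ` if every subset of `σ`
is carved out by some member of `E`. -/
def Shatters {X : Type*} (E : Set (Set X)) (σ : Set X) : Prop :=
  ∀ T ⊆ σ, ∃ C ∈ E, C ∩ σ = T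

/-- Vapnik–Chervonenkis dimension: supremum of cardinalities of finite shattered sets. -/
noncomputable def vcDim {X : Type*} (E : Set (Set X)) : ℕ∞ :=
  ⨆ (σ : Finset X) (_ : Shatters E ↑σ), (σ.card : ℕ∞)

/-- The family of all closed balls in `ℓ∞^d` (sup-norm balls = axis-parallel cubes,
including singletons as balls of radius 0). -/
def Cd (d : ℕ) : Set (Set (Fin d → ℝ)) :=
  {C | ∃ x : Fin d → ℝ, ∃ r : ℝ, 0 ≤ r ∧ C = Metric.closedBall x r}

/-- A closed degenerate ball in `ℓ∞^d`: a product of closed intervals, each of which is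
unbounded on at least one side, i.e. of the form `(-∞, b]`, `[a, ∞)` or all of `ℝ`. -/
def IsDegBall {d : ℕ} (C : Set (Fin d → ℝ)) : Prop :=
  ∃ I : Fin d → Set ℝ,
    (∀ i, (∃ b, I i = Set.Iic b) ∨ (∃ a, I i = Set.Ici a) ∨ I i = Set.univ) ∧
    C = {x | ∀ i, x i ∈ I i}

/-- The family of all closed degenerate balls in `ℓ∞^d`. -/
def Dd (d : ℕ) : Set (Set (Fin d → ℝ)) := {C | IsDegBall C}

/-- The family of closed degenerate balls in `ℓ∞^d` containing the set `F`. -/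
def DdF (d : ℕ) (F : Set (Fin d → ℝ)) : Set (Set (Fin d → ℝ)) :=
  {C | IsDegBall C ∧ F ⊆ C}

/-- The family of closed degenerate balls in `ℓ∞^d` containing the origin. -/
def Dd0 (d : ℕ) : Set (Set (Fin d → ℝ)) := DdF d {0}

/-- Strict separation: if `A` is shattered by closed balls, then for every `T ⊆ A` there is a
ball separating `T` from `A \ T` with a positive margin `ε` on both sides. -/
lemma strictSep {d : ℕ} (A : Finset (Fin d → ℝ)) (hA : Shatters (Cd d) ↑A)
    (T : Finset (Fin d → ℝ)) (hT : T ⊆ A) :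
    ∃ c r ε, 0 < ε ∧ 0 < r ∧
      (∀ a ∈ A, a ∈ T → dist a c ≤ r - ε) ∧
      (∀ a ∈ A, a ∉ T → r + ε ≤ dist a c) := by
  classical
  obtain ⟨C, ⟨c, r0, hr0, rfl⟩, hC⟩ := hA ↑T (Finset.coe_subset.2 hT)
  have hin : ∀ a ∈ A, a ∈ T → dist a c ≤ r0 := by
    intro a _ haT
    have : a ∈ Metric.closedBall c r0 ∩ (↑A : Set (Fin d → ℝ)) := by
      rw [hC]; exact_mod_cast haT
    simpa using this.1
  have hout : ∀ a ∈ A, a ∉ T → r0 < dist a c := by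
    intro a ha haT
    by_contra h
    have : a ∈ Metric.closedBall c r0 ∩ (↑A : Set (Fin d → ℝ)) :=
      ⟨by simpa using (not_lt.1 h), by exact_mod_cast ha⟩
    rw [hC] at this
    exact haT (by exact_mod_cast this)
  by_cases hS : (A \ T).Nonempty
  · set m := (A \ T).inf' hS (fun a => dist a c) with hm
    have hrm : r0 < m := by
      rw [hm, Finset.lt_inf'_iff]
      intro a ha
      obtain ⟨haA, haT⟩ := Finset.mem_sdiff.1 ha
      exact hout a haA haT
    refine ⟨c, (r0 + m) / 2, (m - r0) / 2, by linarith, by linarith, ?_, ?_⟩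
    · intro a ha haT
      have := hin a ha haT
      linarith
    · intro a ha haT
      have : m ≤ dist a c := Finset.inf'_le _ (Finset.mem_sdiff.2 ⟨ha, haT⟩)
      linarith
  · refine ⟨c, r0 + 1, 1, one_pos, by linarith, ?_, ?_⟩
    · intro a ha haT
      have := hin a ha haT; linarith
    · intro a ha haT
      exact absurd ⟨a, Finset.mem_sdiff.2 ⟨ha, haT⟩⟩ hS

/-- If some finite set of `n` points of `ℝ^d` is shattered by the closed balls of `ℓ∞^d`,
then there is such a set whose image under each coordinate projection also has `n` points. -/
theorem exists_shattered_injective_projections_Cd (d n : ℕ)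
    (A : Finset (Fin d → ℝ)) (hcard : A.card = n) (hA : Shatters (Cd d) ↑A) :
    ∃ A' : Finset (Fin d → ℝ), A'.card = n ∧ Shatters (Cd d) ↑A' ∧
      ∀ j : Fin d, ((fun x : Fin d → ℝ => x j) '' ↑A').ncard = n := by
  classical
  subst hcard
  rcases Nat.eq_zero_or_pos d with hd | hd
  · subst hd
    exact ⟨A, rfl, hA, fun j => j.elim0⟩
  -- choose strict separators for all subsets of A
  have key : ∀ T : Finset (Fin d → ℝ), ∃ c r ε, 0 < ε ∧ (T ⊆ A → 0 < r ∧
      (∀ a ∈ A, a ∈ T → dist a c ≤ r - ε) ∧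
      (∀ a ∈ A, a ∉ T → r + ε ≤ dist a c)) := by
    intro T
    by_cases hT : T ⊆ A
    · obtain ⟨c, r, ε, hε, hr, hi, ho⟩ := strictSep A hA T hT
      exact ⟨c, r, ε, hε, fun _ => ⟨hr, hi, ho⟩⟩
    · exact ⟨0, 0, 1, one_pos, fun h => absurd h hT⟩
  choose c r ε hε hsep using key
  set εm := A.powerset.inf' ⟨A, Finset.mem_powerset_self A⟩ ε with hεm
  have hεm_pos : 0 < εm := (Finset.lt_inf'_iff _).2 fun T _ => hε T
  -- indexing function
  set k : (Fin d → ℝ) → ℕ := fun x => A.toList.idxOf x with hkdef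
  have hk_lt : ∀ a ∈ A, k a < A.card := by
    intro a ha
    have : k a < A.toList.length := List.idxOf_lt_length_iff.2 (Finset.mem_toList.2 ha)
    simpa [Finset.length_toList] using this
  have hk_inj : ∀ a ∈ A, ∀ b ∈ A, k a = k b → a = b := by
    intro a ha b hb h
    exact (List.idxOf_inj (Finset.mem_toList.2 ha)).1 h
  -- bad values of η
  set bad : Finset ℝ := ((A ×ˢ A) ×ˢ (Finset.univ : Finset (Fin d))).image
    (fun p => (p.1.2 p.2 - p.1.1 p.2) / ((k p.1.1 : ℝ) - (k p.1.2 : ℝ))) with hbad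
  have hεA : (0:ℝ) < εm / (A.card + 1) := by positivity
  obtain ⟨η, hη_mem, hη_bad⟩ := (Set.Ioo_infinite hεA).exists_notMem_finset bad
  obtain ⟨hη_pos, hη_lt⟩ := hη_mem
  -- the perturbation
  set f : (Fin d → ℝ) → (Fin d → ℝ) := fun x => x + fun _ => (k x : ℝ) * η with hf
  have hfj : ∀ x j, f x j = x j + (k x : ℝ) * η := fun x j => rfl
  have hpert : ∀ a ∈ A, dist (f a) a < εm := by
    intro a ha
    have h1 : dist (f a) a ≤ (k a : ℝ) * η := by
      refine (dist_pi_le_iff (by positivity)).2 fun i => ?_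
      rw [hfj, Real.dist_eq]
      simp [abs_of_nonneg, mul_nonneg (Nat.cast_nonneg _) hη_pos.le]
    have h2 : (k a : ℝ) * η ≤ (A.card : ℝ) * η := by
      have : (k a : ℝ) ≤ A.card := Nat.cast_le.2 (hk_lt a ha).le
      nlinarith
    have h3 : (A.card : ℝ) * η < εm := by
      have hlt : ((A.card : ℝ) + 1) * η < εm := by
        have := (lt_div_iff₀ (by positivity : (0:ℝ) < (A.card : ℝ) + 1)).1 hη_lt
        linarith
      nlinarith
    linarith
  -- coordinate injectivity
  have hcoord : ∀ a ∈ A, ∀ b ∈ A, ∀ j : Fin d, f a j = f b j → a = b := by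
    intro a ha b hb j hj
    by_contra hne
    have hkne : (k a : ℝ) ≠ (k b : ℝ) := by
      intro h
      exact hne (hk_inj a ha b hb (Nat.cast_injective h))
    have heq : ((k a : ℝ) - (k b : ℝ)) * η = b j - a j := by
      rw [hfj, hfj] at hj
      ring_nf
      nlinarith [hj]
    have hη_eq : η = (b j - a j) / ((k a : ℝ) - (k b : ℝ)) := by
      rw [eq_div_iff (sub_ne_zero.2 hkne)]
      linarith [heq]
    refine hη_bad ?_
    rw [hbad]
    exact Finset.mem_image.2 ⟨⟨⟨a, b⟩, j⟩, by
      simp [Finset.mem_product, ha, hb], hη_eq.symm⟩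
  have hj0 : Fin d := ⟨0, hd⟩
  have hfinj : Set.InjOn f ↑A := by
    intro a ha b hb h
    exact hcoord a ha b hb hj0 (congrFun h hj0)
  set A' := A.image f with hA'
  have hA'coe : (↑A' : Set (Fin d → ℝ)) = f '' ↑A := by
    rw [hA', Finset.coe_image]
  have hcard' : A'.card = A.card := Finset.card_image_of_injOn hfinj
  refine ⟨A', hcard', ?_, ?_⟩
  · -- shattering
    intro T' hT'
    set T := A.filter (fun a => f a ∈ T') with hTdef
    have hTA : T ⊆ A := Finset.filter_subset _ _
    obtain ⟨hr, hin, hout⟩ := hsep T hTA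
    have hεT : εm ≤ ε T := Finset.inf'_le _ (Finset.mem_powerset.2 hTA)
    refine ⟨Metric.closedBall (c T) (r T), ⟨c T, r T, hr.le, rfl⟩, ?_⟩
    ext x
    simp only [Set.mem_inter_iff, Metric.mem_closedBall]
    constructor
    · rintro ⟨hxd, hxA'⟩
      rw [hA'coe] at hxA'
      obtain ⟨a, ha, rfl⟩ := hxA'
      have haT : a ∈ T := by
        by_contra haT
        have h1 := hout a ha haT
        have h2 : dist a (c T) ≤ dist a (f a) + dist (f a) (c T) := dist_triangle _ _ _
        have h3 := hpert a ha
        rw [dist_comm (f a) a] at h3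
        linarith
      exact (Finset.mem_filter.1 haT).2
    · intro hxT'
      have hxA' : x ∈ (↑A' : Set (Fin d → ℝ)) := hT' hxT'
      have hxA'2 := hxA'
      rw [hA'coe] at hxA'2
      obtain ⟨a, ha, rfl⟩ := hxA'2
      have haT : a ∈ T := Finset.mem_filter.2 ⟨ha, hxT'⟩
      have h1 := hin a ha haT
      have h2 : dist (f a) (c T) ≤ dist (f a) a + dist a (c T) := dist_triangle _ _ _
      have h3 := hpert a ha
      exact ⟨by linarith, hxA'⟩
  · -- injective projections
    intro j
    have hinj : Set.InjOn (fun x : Fin d → ℝ => x j) ↑A' := by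
      rintro x hx y hy hxy
      rw [hA'coe] at hx hy
      obtain ⟨a, ha, rfl⟩ := hx
      obtain ⟨b, hb, rfl⟩ := hy
      exact congrArg f (hcoord a ha b hb j hxy)
    rw [Set.ncard_image_of_injOn hinj, Set.ncard_coe_finset, hcard']
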